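/- Let p₁, p₂, p₃ ≥ 2 be integers and let m be the number of even integers among p₁, p₂, p₃. Let S = {(l₁,l₂,l₃) ∈ ℤ³ : 0 ≤ lᵢ ≤ pᵢ − 2} and for j ∈ {1,2,3} let σⱼ : S → S be the involution with (σⱼ(l))ⱼ = lⱼ and (σⱼ(l))ᵢ = pᵢ − 2 − lᵢ for i ≠ j. Then the number of orbits of the group of permutations of S generated by σ₁, σ₂, σ₃ equals: (1/4)·(p₁−1)(p₂−1)(p₃−1) if m ≤ 1; (1/4)·((p₁−1)(p₂−1)(p₃−1) + (pⱼ−1)) if m = 2, where pⱼ is the unique odd weight; and (1/4)·((p₁−1)(p₂−1)(p₃−1) + (p₁−1)+(p₂−1)+(p₃−1)) if m = 3. -/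
import Mathlib

/-- The index set S = {(l₁,l₂,l₃) ∈ ℤ³ : 0 ≤ lᵢ ≤ pᵢ − 2}. -/
abbrev SBox (p : Fin 3 → ℤ) := {l : Fin 3 → ℤ // ∀ i, 0 ≤ l i ∧ l i ≤ p i - 2}

/-- The map σⱼ : S → S fixing the j-th coordinate and sending lᵢ to pᵢ − 2 − lᵢ for i ≠ j. -/
def sigmaFun (p : Fin 3 → ℤ) (j : Fin 3) (l : SBox p) : SBox p :=
  ⟨fun i => if i = j then l.1 i else p i - 2 - l.1 i, by
    intro i
    rcases eq_or_ne i j with h | h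
    · subst h; simpa using l.2 i
    · have := l.2 i; simp only [if_neg h]; omega⟩

lemma sigmaFun_involutive (p : Fin 3 → ℤ) (j : Fin 3) :
    Function.Involutive (sigmaFun p j) := by
  intro l
  apply Subtype.ext
  funext i
  by_cases h : i = j <;> simp [sigmaFun, h]

/-- σⱼ as a permutation of S. -/
def sigmaPerm (p : Fin 3 → ℤ) (j : Fin 3) : Equiv.Perm (SBox p) :=
  (sigmaFun_involutive p j).toPerm

/-! ### Auxiliary lemmas -/

lemma sigmaFun_comp (p : Fin 3 → ℤ) (j k m : Fin 3) (hjk : j ≠ k) (hmj : m ≠ j)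
    (hmk : m ≠ k) (x : SBox p) : sigmaFun p j (sigmaFun p k x) = sigmaFun p m x := by
  apply Subtype.ext; funext i
  show (if i = j then (if i = k then x.1 i else p i - 2 - x.1 i)
        else p i - 2 - (if i = k then x.1 i else p i - 2 - x.1 i))
      = if i = m then x.1 i else p i - 2 - x.1 i
  fin_cases i <;> fin_cases j <;> fin_cases k <;> fin_cases m <;> simp_all

lemma sigmaPerm_apply (p : Fin 3 → ℤ) (j : Fin 3) (x : SBox p) :
    sigmaPerm p j x = sigmaFun p j x := rfl

lemma sigmaPerm_mul (p : Fin 3 → ℤ) (j k m : Fin 3) (hjk : j ≠ k) (hmj : m ≠ j)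
    (hmk : m ≠ k) : sigmaPerm p j * sigmaPerm p k = sigmaPerm p m :=
  Equiv.ext fun x => sigmaFun_comp p j k m hjk hmj hmk x

lemma sigmaPerm_sq (p : Fin 3 → ℤ) (j : Fin 3) : sigmaPerm p j ^ 2 = 1 := by
  rw [sq]; exact Equiv.ext fun x => sigmaFun_involutive p j x

lemma sigma_commute (p : Fin 3 → ℤ) : Commute (sigmaPerm p 0) (sigmaPerm p 1) := by
  unfold Commute SemiconjBy
  rw [sigmaPerm_mul p 0 1 2 (by decide) (by decide) (by decide),
      sigmaPerm_mul p 1 0 2 (by decide) (by decide) (by decide)]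

lemma pow_eq_pow_mod_two {G : Type*} [Group G] {g : G} (h : g ^ 2 = 1) (n : ℕ) :
    g ^ (n % 2) = g ^ n := by
  conv_rhs => rw [← Nat.div_add_mod n 2, pow_add, pow_mul, h, one_pow, one_mul]

/-- The Klein four group. -/
abbrev K4 := Multiplicative (ZMod 2 × ZMod 2)

def kfun (p : Fin 3 → ℤ) (g : K4) : Equiv.Perm (SBox p) :=
  sigmaPerm p 0 ^ (g.toAdd.1.val) * sigmaPerm p 1 ^ (g.toAdd.2.val)

def phi (p : Fin 3 → ℤ) : K4 →* Equiv.Perm (SBox p) :=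
  MonoidHom.mk' (kfun p) (by
    intro a b
    unfold kfun
    rw [toAdd_mul, Prod.fst_add, Prod.snd_add, ZMod.val_add, ZMod.val_add,
      pow_eq_pow_mod_two (sigmaPerm_sq p 0), pow_eq_pow_mod_two (sigmaPerm_sq p 1),
      pow_add, pow_add]
    have hc : Commute (sigmaPerm p 1 ^ (a.toAdd.2.val)) (sigmaPerm p 0 ^ (b.toAdd.1.val)) :=
      ((sigma_commute p).symm.pow_pow _ _)
    rw [mul_assoc, ← mul_assoc (sigmaPerm p 0 ^ (b.toAdd.1.val)), ← hc.eq]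
    group)

lemma phi_apply (p : Fin 3 → ℤ) (g : K4) : phi p g = kfun p g := rfl

lemma kfun_ofAdd_10 (p : Fin 3 → ℤ) :
    kfun p (Multiplicative.ofAdd ((1 : ZMod 2), (0 : ZMod 2))) = sigmaPerm p 0 := by
  show sigmaPerm p 0 ^ (1 : ZMod 2).val * sigmaPerm p 1 ^ (0 : ZMod 2).val = _
  norm_num [ZMod.val_one, ZMod.val_zero]

lemma kfun_ofAdd_01 (p : Fin 3 → ℤ) :
    kfun p (Multiplicative.ofAdd ((0 : ZMod 2), (1 : ZMod 2))) = sigmaPerm p 1 := by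
  show sigmaPerm p 0 ^ (0 : ZMod 2).val * sigmaPerm p 1 ^ (1 : ZMod 2).val = _
  norm_num [ZMod.val_one, ZMod.val_zero]

lemma kfun_ofAdd_11 (p : Fin 3 → ℤ) :
    kfun p (Multiplicative.ofAdd ((1 : ZMod 2), (1 : ZMod 2))) = sigmaPerm p 2 := by
  show sigmaPerm p 0 ^ (1 : ZMod 2).val * sigmaPerm p 1 ^ (1 : ZMod 2).val = _
  rw [ZMod.val_one, pow_one, pow_one]
  exact sigmaPerm_mul p 0 1 2 (by decide) (by decide) (by decide)

lemma kfun_ofAdd_00 (p : Fin 3 → ℤ) :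
    kfun p (Multiplicative.ofAdd ((0 : ZMod 2), (0 : ZMod 2))) = 1 := by
  show sigmaPerm p 0 ^ (0 : ZMod 2).val * sigmaPerm p 1 ^ (0 : ZMod 2).val = _
  norm_num [ZMod.val_zero]

lemma range_phi (p : Fin 3 → ℤ) :
    Subgroup.closure {sigmaPerm p 0, sigmaPerm p 1, sigmaPerm p 2} = (phi p).range := by
  apply le_antisymm
  · rw [Subgroup.closure_le]
    rintro x (rfl | rfl | rfl)
    · exact ⟨Multiplicative.ofAdd (1, 0), kfun_ofAdd_10 p⟩
    · exact ⟨Multiplicative.ofAdd (0, 1), kfun_ofAdd_01 p⟩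
    · exact ⟨Multiplicative.ofAdd (1, 1), kfun_ofAdd_11 p⟩
  · rintro x ⟨g, rfl⟩
    have h0 : sigmaPerm p 0 ∈ Subgroup.closure {sigmaPerm p 0, sigmaPerm p 1, sigmaPerm p 2} :=
      Subgroup.subset_closure (by left; rfl)
    have h1 : sigmaPerm p 1 ∈ Subgroup.closure {sigmaPerm p 0, sigmaPerm p 1, sigmaPerm p 2} :=
      Subgroup.subset_closure (by right; left; rfl)
    exact mul_mem (pow_mem h0 _) (pow_mem h1 _)

instance SBox.finite (p : Fin 3 → ℤ) : Finite (SBox p) := by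
  have : ∀ i, Finite (Set.Icc (0:ℤ) (p i - 2)) := fun i => (Set.finite_Icc _ _)
  apply Finite.of_injective
    (fun x => (fun i => ⟨x.1 i, Set.mem_Icc.mpr (x.2 i)⟩ : ∀ i, Set.Icc (0:ℤ) (p i - 2)))
  intro x y h
  apply Subtype.ext; funext i
  exact congrArg Subtype.val (congrFun h i)
lemma card_int_icc (a b : ℤ) : Nat.card {x : ℤ // a ≤ x ∧ x ≤ b} = (b + 1 - a).toNat := by
  have e : {x : ℤ // a ≤ x ∧ x ≤ b} ≃ (Set.Icc a b) :=
    Equiv.subtypeEquiv (Equiv.refl _) (by simp)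
  rw [Nat.card_congr e, Nat.card_coe_set_eq, Set.ncard_eq_toFinset_card',
    Set.toFinset_Icc, Int.card_Icc]

lemma card_fix (p : Fin 3 → ℤ) (hp : ∀ i, 2 ≤ p i) (j : Fin 3) :
    (Nat.card {x : SBox p // sigmaFun p j x = x} : ℤ) =
      if ∀ i, i ≠ j → Even (p i) then p j - 1 else 0 := by
  have hfix : ∀ x : SBox p, sigmaFun p j x = x ↔ ∀ i, i ≠ j → p i - 2 - x.1 i = x.1 i := by
    intro x
    rw [Subtype.ext_iff, funext_iff]
    constructor
    · intro h i hi
      have := h i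
      simpa [sigmaFun, if_neg hi] using this
    · intro h i
      rcases eq_or_ne i j with rfl | hi
      · simp [sigmaFun]
      · simpa [sigmaFun, if_neg hi] using h i hi
  by_cases hc : ∀ i, i ≠ j → Even (p i)
  · rw [if_pos hc]
    have hmem : ∀ (t : {t : ℤ // 0 ≤ t ∧ t ≤ p j - 2}) (i : Fin 3),
        0 ≤ (if i = j then t.1 else p i / 2 - 1) ∧
          (if i = j then t.1 else p i / 2 - 1) ≤ p i - 2 := by
      intro t i
      rcases eq_or_ne i j with rfl | hi
      · simpa using t.2
      · rw [if_neg hi]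
        have he := (Int.even_iff).mp (hc i hi)
        have := hp i
        omega
    have e2 : {x : SBox p // sigmaFun p j x = x} ≃ {t : ℤ // 0 ≤ t ∧ t ≤ p j - 2} :=
      { toFun := fun x => ⟨x.1.1 j, x.1.2 j⟩
        invFun := fun t => ⟨⟨fun i => if i = j then t.1 else p i / 2 - 1, hmem t⟩, by
          rw [hfix]
          intro i hi
          have he := (Int.even_iff).mp (hc i hi)
          have := hp i
          show p i - 2 - (if i = j then t.1 else p i / 2 - 1)
              = (if i = j then t.1 else p i / 2 - 1)
          rw [if_neg hi]
          omega⟩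
        left_inv := fun x => by
          apply Subtype.ext; apply Subtype.ext; funext i
          show (if i = j then x.1.1 j else p i / 2 - 1) = x.1.1 i
          rcases eq_or_ne i j with rfl | hi
          · rw [if_pos rfl]
          · have hx := (hfix x.1).mp x.2 i hi
            have he := (Int.even_iff).mp (hc i hi)
            rw [if_neg hi]
            omega
        right_inv := fun t => by apply Subtype.ext; simp }
    rw [Nat.card_congr e2, card_int_icc]
    have := hp j
    rw [Int.toNat_of_nonneg (by omega)]
    ring
  · rw [if_neg hc]
    push_neg at hc
    obtain ⟨i, hi, hodd⟩ := hc
    have : IsEmpty {x : SBox p // sigmaFun p j x = x} := by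
      constructor
      rintro ⟨x, hx⟩
      have h := (hfix x).mp hx i hi
      refine hodd ⟨x.1 i + 1, ?_⟩
      omega
    simp [Nat.card_of_isEmpty]

lemma card_box (p : Fin 3 → ℤ) (hp : ∀ i, 2 ≤ p i) :
    (Nat.card (SBox p) : ℤ) = (p 0 - 1) * (p 1 - 1) * (p 2 - 1) := by
  have e : SBox p ≃ ∀ i, {x : ℤ // 0 ≤ x ∧ x ≤ p i - 2} :=
    @Equiv.subtypePiEquivPi (Fin 3) (fun _ => ℤ) (fun i x => 0 ≤ x ∧ x ≤ p i - 2)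
  rw [Nat.card_congr e, Nat.card_pi]
  have h : ∀ i : Fin 3, Nat.card {x : ℤ // 0 ≤ x ∧ x ≤ p i - 2} = (p i - 1).toNat := by
    intro i; rw [card_int_icc]; congr 1; ring
  simp only [h]
  rw [Fin.prod_univ_three]
  push_cast [Int.toNat_of_nonneg (by have := hp 0; omega : (0:ℤ) ≤ p 0 - 1),
    Int.toNat_of_nonneg (by have := hp 1; omega : (0:ℤ) ≤ p 1 - 1),
    Int.toNat_of_nonneg (by have := hp 2; omega : (0:ℤ) ≤ p 2 - 1)]
  ring


/-- Orbit counting formula (Theorem A / Theorem 2.5, combinatorial form): the number of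
orbits of the group generated by σ₁, σ₂, σ₃ on S, according to the number m of even
weights among p₁, p₂, p₃. -/
theorem orbit_count (p : Fin 3 → ℤ) (hp : ∀ i, 2 ≤ p i)
    (m : ℕ) (hm : m = (Finset.univ.filter fun i => Even (p i)).card)
    (n : ℕ)
    (hn : n = Nat.card (Quotient (MulAction.orbitRel
      (Subgroup.closure {sigmaPerm p 0, sigmaPerm p 1, sigmaPerm p 2}) (SBox p)))) :
    (m ≤ 1 → (4 * n : ℤ) = (p 0 - 1) * (p 1 - 1) * (p 2 - 1)) ∧
    (∀ j : Fin 3, m = 2 → ¬ Even (p j) →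
      (4 * n : ℤ) = (p 0 - 1) * (p 1 - 1) * (p 2 - 1) + (p j - 1)) ∧
    (m = 3 → (4 * n : ℤ) =
      (p 0 - 1) * (p 1 - 1) * (p 2 - 1) + ((p 0 - 1) + (p 1 - 1) + (p 2 - 1))) := by
  classical
  letI : MulAction K4 (SBox p) := MulAction.compHom _ (phi p)
  -- the two orbit relations coincide
  set H := Subgroup.closure {sigmaPerm p 0, sigmaPerm p 1, sigmaPerm p 2} with hH
  have hrel : ∀ a b : SBox p,
      (MulAction.orbitRel H (SBox p)) a b ↔ (MulAction.orbitRel K4 (SBox p)) a b := by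
    intro a b
    rw [MulAction.orbitRel_apply, MulAction.orbitRel_apply,
      MulAction.mem_orbit_iff, MulAction.mem_orbit_iff]
    constructor
    · rintro ⟨⟨h, hh⟩, rfl⟩
      rw [hH, range_phi p] at hh
      obtain ⟨g, rfl⟩ := hh
      exact ⟨g, rfl⟩
    · rintro ⟨g, rfl⟩
      have : phi p g ∈ H := by rw [hH, range_phi p]; exact ⟨g, rfl⟩
      exact ⟨⟨phi p g, this⟩, rfl⟩
  have hn' : n = Nat.card (Quotient (MulAction.orbitRel K4 (SBox p))) := by
    rw [hn]; exact Nat.card_congr (Quotient.congrRight hrel)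
  -- Burnside
  letI : Fintype (SBox p) := Fintype.ofFinite _
  letI : ∀ a : K4, Fintype (MulAction.fixedBy (SBox p) a) := fun a => Fintype.ofFinite _
  letI : Fintype (Quotient (MulAction.orbitRel K4 (SBox p))) := Fintype.ofFinite _
  have burnside := MulAction.sum_card_fixedBy_eq_card_orbits_mul_card_group K4 (SBox p)
  have hK4 : Fintype.card K4 = 4 := by
    rw [Fintype.card_multiplicative, Fintype.card_prod, ZMod.card]
  -- fixed point identification
  have hfixcard : ∀ g : K4, (Fintype.card (MulAction.fixedBy (SBox p) g) : ℤ)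
      = (Nat.card {x : SBox p // kfun p g x = x} : ℤ) := by
    intro g
    have e : {x : SBox p // x ∈ MulAction.fixedBy (SBox p) g} ≃ {x : SBox p // kfun p g x = x} :=
      Equiv.subtypeEquivRight (fun x => by
        rw [MulAction.mem_fixedBy, MulAction.compHom_smul_def]; rfl)
    rw [← Nat.card_eq_fintype_card, Nat.card_congr e]
  have hfs : ∀ j : Fin 3, (Nat.card {x : SBox p // sigmaPerm p j x = x} : ℤ) =
      if ∀ i, i ≠ j → Even (p i) then p j - 1 else 0 := fun j => card_fix p hp j
  -- compute the sum over K4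
  have hsum : (∑ a : K4, Fintype.card (MulAction.fixedBy (SBox p) a) : ℤ) =
      (p 0 - 1) * (p 1 - 1) * (p 2 - 1)
      + (if ∀ i, i ≠ (0 : Fin 3) → Even (p i) then p 0 - 1 else 0)
      + (if ∀ i, i ≠ (1 : Fin 3) → Even (p i) then p 1 - 1 else 0)
      + (if ∀ i, i ≠ (2 : Fin 3) → Even (p i) then p 2 - 1 else 0) := by
    push_cast
    rw [← Equiv.sum_comp (Multiplicative.ofAdd (α := ZMod 2 × ZMod 2))
      (fun a : K4 => (Fintype.card (MulAction.fixedBy (SBox p) a) : ℤ)),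
      Fintype.sum_prod_type]
    have huniv : (Finset.univ : Finset (ZMod 2)) = {0, 1} := by decide
    rw [huniv, Finset.sum_insert (by decide), Finset.sum_singleton,
      Finset.sum_insert (by decide), Finset.sum_singleton,
      Finset.sum_insert (by decide), Finset.sum_singleton]
    rw [hfixcard, hfixcard, hfixcard, hfixcard,
      kfun_ofAdd_00, kfun_ofAdd_01, kfun_ofAdd_10, kfun_ofAdd_11]

    have h1 : (Nat.card {x : SBox p // (1 : Equiv.Perm (SBox p)) x = x} : ℤ)
        = (p 0 - 1) * (p 1 - 1) * (p 2 - 1) := by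
      rw [← card_box p hp]
      congr 1
      apply Nat.card_congr
      exact (Equiv.subtypeUnivEquiv fun x => rfl)
    have hsg : ∀ j : Fin 3, (Nat.card {x : SBox p // sigmaPerm p j x = x} : ℤ) =
        (Nat.card {x : SBox p // sigmaFun p j x = x} : ℤ) := fun j => rfl
    rw [h1, hsg 0, hsg 1, hsg 2, card_fix p hp 0, card_fix p hp 1, card_fix p hp 2]
    ring
  -- assemble
  have key : (4 * n : ℤ) = (p 0 - 1) * (p 1 - 1) * (p 2 - 1)
      + (if ∀ i, i ≠ (0 : Fin 3) → Even (p i) then p 0 - 1 else 0)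
      + (if ∀ i, i ≠ (1 : Fin 3) → Even (p i) then p 1 - 1 else 0)
      + (if ∀ i, i ≠ (2 : Fin 3) → Even (p i) then p 2 - 1 else 0) := by
    have hnc : n = Fintype.card (Quotient (MulAction.orbitRel K4 (SBox p))) := by
      rw [hn', Nat.card_eq_fintype_card]
    have hb2 : (∑ a : K4, Fintype.card (MulAction.fixedBy (SBox p) a)) = n * 4 := by
      rw [burnside, hK4, ← hnc]
    rw [← hsum, ← Nat.cast_sum, hb2]
    push_cast
    ring
  -- translate the conditions
  have c0 : (∀ i, i ≠ (0 : Fin 3) → Even (p i)) ↔ Even (p 1) ∧ Even (p 2) := by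
    constructor
    · exact fun h => ⟨h 1 (by decide), h 2 (by decide)⟩
    · rintro ⟨h1, h2⟩ i hi; fin_cases i
      · simp at hi
      · exact h1
      · exact h2
  have c1 : (∀ i, i ≠ (1 : Fin 3) → Even (p i)) ↔ Even (p 0) ∧ Even (p 2) := by
    constructor
    · exact fun h => ⟨h 0 (by decide), h 2 (by decide)⟩
    · rintro ⟨h1, h2⟩ i hi; fin_cases i
      · exact h1
      · simp at hi
      · exact h2
  have c2 : (∀ i, i ≠ (2 : Fin 3) → Even (p i)) ↔ Even (p 0) ∧ Even (p 1) := by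
    constructor
    · exact fun h => ⟨h 0 (by decide), h 1 (by decide)⟩
    · rintro ⟨h1, h2⟩ i hi; fin_cases i
      · exact h1
      · exact h2
      · simp at hi
  simp only [c0, c1, c2] at key
  have hmval : m = (if Even (p 0) then 1 else 0) + (if Even (p 1) then 1 else 0)
      + (if Even (p 2) then 1 else 0) := by
    rw [hm, Finset.card_filter, Fin.sum_univ_three]
  refine ⟨?_, ?_, ?_⟩
  · intro hm1
    by_cases e0 : Even (p 0) <;> by_cases e1 : Even (p 1) <;> by_cases e2 : Even (p 2) <;>
      simp only [e0, e1, e2, if_true, if_false, and_true, and_false, true_and, false_and,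
        and_self, ite_true, ite_false, add_zero] at hmval key <;>
      first
        | omega
        | linarith [key]
  · intro j hm2 hodd
    fin_cases j <;>
      by_cases e0 : Even (p 0) <;> by_cases e1 : Even (p 1) <;> by_cases e2 : Even (p 2) <;>
      simp only [Fin.isValue, Fin.zero_eta, Fin.mk_one, Fin.reduceFinMk, e0, e1, e2, if_true, if_false, and_true, and_false, true_and,
        false_and, and_self, ite_true, ite_false, add_zero, not_true, not_false_iff] at hmval key hodd ⊢ <;>
      first
        | omega
        | exact hodd.elim
        | linarith [key]
  · intro hm3
    by_cases e0 : Even (p 0) <;> by_cases e1 : Even (p 1) <;> by_cases e2 : Even (p 2) <;>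
      simp only [e0, e1, e2, if_true, if_false, and_true, and_false, true_and, false_and,
        and_self, ite_true, ite_false, add_zero] at hmval key <;>
      first
        | omega
        | linarith [key]
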